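/- Suppose additionally that I(S) = 0 whenever |S| ≥ M+1 (no interactions of order above M). Then for every M ≤ m ≤ n, ū(m) = ∑_{k=1}^{M} (C(m,k)/C(n,k)) · A(k), where A(k) = ∑_{|T|=k} I(T). -/

import Mathlib

open Finset

lemma mobius_inv {N : Type*} [DecidableEq N] (u I : Finset N → ℝ)
    (hI : ∀ S : Finset N, I S = ∑ T ∈ S.powerset, (-1 : ℝ) ^ (S.card - T.card) * u T) :
    ∀ S : Finset N, u S = ∑ T ∈ S.powerset, I T := by
  intro S
  have h1 : ∑ T ∈ S.powerset, I T
      = ∑ R ∈ S.powerset, ∑ T ∈ S.powerset.filter (fun T => R ⊆ T),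
          (-1 : ℝ) ^ (T.card - R.card) * u R := by
    simp only [hI]
    refine Finset.sum_comm' ?_
    intro T R
    simp only [mem_powerset, mem_filter]
    constructor
    · rintro ⟨h1, h2⟩; exact ⟨⟨h1, h2⟩, h2.trans h1⟩
    · rintro ⟨⟨h1, h2⟩, _⟩; exact ⟨h1, h2⟩
  rw [h1]
  have h2 : ∀ R ∈ S.powerset,
      ∑ T ∈ S.powerset.filter (fun T => R ⊆ T), (-1 : ℝ) ^ (T.card - R.card) * u R
      = (if R = S then (1:ℝ) else 0) * u R := by
    intro R hR
    rw [mem_powerset] at hR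
    have key : ∑ T ∈ S.powerset.filter (fun T => R ⊆ T), (-1 : ℝ) ^ (T.card - R.card)
        = ∑ W ∈ (S \ R).powerset, (-1 : ℝ) ^ W.card := by
      refine (Finset.sum_bij' (fun T _ => T \ R) (fun W _ => W ∪ R) ?_ ?_ ?_ ?_ ?_).symm.symm
      · intro T hT
        simp only [mem_filter, mem_powerset] at hT ⊢
        exact sdiff_subset_sdiff hT.1 le_rfl
      · intro W hW
        simp only [mem_powerset] at hW
        simp only [mem_filter, mem_powerset]
        constructor
        · exact union_subset (hW.trans sdiff_subset) (fun x hx => by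
            by_contra hxS
            exact hxS ((mem_powerset.mp (mem_powerset.mpr hR)) hx))
        · exact subset_union_right
      · intro T hT
        simp only [mem_filter, mem_powerset] at hT
        exact sdiff_union_of_subset hT.2
      · intro W hW
        simp only [mem_powerset] at hW
        have hdisj : Disjoint W R := disjoint_of_subset_left hW (disjoint_sdiff_self_left)
        exact union_sdiff_cancel_right hdisj
      · intro T hT
        simp only [mem_filter, mem_powerset] at hT
        rw [card_sdiff_of_subset hT.2]
    rw [← Finset.sum_mul, key]
    congr 1
    have : ((↑(∑ W ∈ (S \ R).powerset, (-1 : ℤ) ^ W.card) : ℝ))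
        = ∑ W ∈ (S \ R).powerset, (-1 : ℝ) ^ W.card := by push_cast; rfl
    rw [← this, Finset.sum_powerset_neg_one_pow_card]
    by_cases h : R = S
    · simp [h]
    · have : S \ R ≠ ∅ := by
        intro hc
        exact h (subset_antisymm hR (by rwa [sdiff_eq_empty_iff_subset] at hc))
      simp [this, h]
  rw [Finset.sum_congr rfl h2]
  simp

lemma count_supersets {N : Type*} [Fintype N] [DecidableEq N] (T : Finset N) {m : ℕ}
    (hTm : T.card ≤ m) :
    ((Finset.powersetCard m (Finset.univ : Finset N)).filter (fun S => T ⊆ S)).card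
      = Nat.choose (Fintype.card N - T.card) (m - T.card) := by
  have hc : Fintype.card N - T.card = ((Finset.univ : Finset N) \ T).card := by
    rw [card_sdiff_of_subset (subset_univ T), card_univ]
  rw [hc, ← Finset.card_powersetCard (m - T.card) ((Finset.univ : Finset N) \ T)]
  refine Finset.card_bij' (fun S _ => S \ T) (fun W _ => W ∪ T) ?_ ?_ ?_ ?_
  · intro S hS
    simp only [mem_filter, mem_powersetCard] at hS
    rw [mem_powersetCard]
    exact ⟨sdiff_subset_sdiff (subset_univ S) le_rfl,
      by rw [card_sdiff_of_subset hS.2, hS.1.2]⟩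
  · intro W hW
    rw [mem_powersetCard] at hW
    have hdisj : Disjoint W T := disjoint_of_subset_left hW.1 disjoint_sdiff_self_left
    simp only [mem_filter, mem_powersetCard]
    refine ⟨⟨subset_univ _, ?_⟩, subset_union_right⟩
    rw [card_union_of_disjoint hdisj, hW.2]
    omega
  · intro S hS
    simp only [mem_filter, mem_powersetCard] at hS
    exact sdiff_union_of_subset hS.2
  · intro W hW
    rw [mem_powersetCard] at hW
    exact union_sdiff_cancel_right (disjoint_of_subset_left hW.1 disjoint_sdiff_self_left)

theorem avg_output_decomposition_bounded_order {N : Type*} [Fintype N] [DecidableEq N]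
    (u I : Finset N → ℝ) (hu : u ∅ = 0)
    (hI : ∀ S : Finset N, I S = ∑ T ∈ S.powerset, (-1 : ℝ) ^ (S.card - T.card) * u T)
    (M : ℕ) (hM : 0 < M) (hMn : M < Fintype.card N)
    (hhigh : ∀ S : Finset N, M < S.card → I S = 0)
    (A : ℕ → ℝ)
    (hA : ∀ k, A k = ∑ T ∈ Finset.powersetCard k (Finset.univ : Finset N), I T)
    (ubar : ℕ → ℝ)
    (hubar : ∀ m, ubar m = ((Nat.choose (Fintype.card N) m : ℝ))⁻¹ *
        ∑ S ∈ Finset.powersetCard m (Finset.univ : Finset N), u S) :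
    ∀ m, M ≤ m → m ≤ Fintype.card N →
      ubar m = ∑ k ∈ Finset.Icc 1 M,
        ((Nat.choose m k : ℝ) / (Nat.choose (Fintype.card N) k : ℝ)) * A k := by
  intro m hMm hmn
  have hinv := mobius_inv u I hI
  have hIempty : I ∅ = 0 := by rw [hI]; simp [hu]
  rw [hubar]
  have hswap : ∑ S ∈ powersetCard m (univ : Finset N), u S
      = ∑ T ∈ (univ : Finset N).powerset,
          ∑ S ∈ (powersetCard m (univ : Finset N)).filter (fun S => T ⊆ S), I T := by
    simp only [hinv]
    refine Finset.sum_comm' ?_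
    intro S T
    simp only [mem_powersetCard, mem_filter, mem_powerset, subset_univ, true_and, and_true]
  rw [hswap]
  have hconst : ∀ T : Finset N,
      ∑ S ∈ (powersetCard m (univ : Finset N)).filter (fun S => T ⊆ S), I T
      = (((powersetCard m (univ : Finset N)).filter (fun S => T ⊆ S)).card : ℝ) * I T := by
    intro T
    rw [Finset.sum_const, nsmul_eq_mul]
  simp only [hconst]
  rw [powerset_card_biUnion, sum_biUnion (fun i _ j _ h => pairwise_disjoint_powersetCard _ h)]
  have hsplit : ∑ j ∈ range ((univ : Finset N).card + 1),
      ∑ T ∈ powersetCard j (univ : Finset N),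
        (((powersetCard m (univ : Finset N)).filter (fun S => T ⊆ S)).card : ℝ) * I T
      = ∑ k ∈ Finset.Icc 1 M,
        ∑ T ∈ powersetCard k (univ : Finset N),
          (((powersetCard m (univ : Finset N)).filter (fun S => T ⊆ S)).card : ℝ) * I T := by
    refine (Finset.sum_subset ?_ ?_).symm
    · intro k hk
      rw [mem_Icc] at hk
      rw [mem_range, card_univ]
      omega
    · intro j _ hj
      rw [mem_Icc] at hj
      refine Finset.sum_eq_zero fun T hT => ?_
      rw [mem_powersetCard] at hT
      rcases Nat.lt_or_ge j 1 with h1 | h1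
      · have : T = ∅ := by
          rw [← Finset.card_eq_zero, hT.2]; omega
        rw [this, hIempty, mul_zero]
      · rw [hhigh T (by omega), mul_zero]
  rw [hsplit, mul_sum]
  refine Finset.sum_congr rfl fun k hk => ?_
  rw [mem_Icc] at hk
  have hkm : k ≤ m := hk.2.trans hMm
  have hinner : ∑ T ∈ powersetCard k (univ : Finset N),
      (((powersetCard m (univ : Finset N)).filter (fun S => T ⊆ S)).card : ℝ) * I T
      = ((Fintype.card N - k).choose (m - k) : ℝ) * A k := by
    rw [hA, mul_sum]
    refine Finset.sum_congr rfl fun T hT => ?_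
    rw [mem_powersetCard] at hT
    rw [count_supersets T (by rw [hT.2]; exact hkm), hT.2]
  rw [hinner]
  have hchoose : ((Fintype.card N).choose m : ℝ) * ((m.choose k : ℝ))
      = ((Fintype.card N).choose k : ℝ) * (((Fintype.card N) - k).choose (m - k) : ℝ) := by
    exact_mod_cast congrArg (Nat.cast : ℕ → ℝ) (Nat.choose_mul hkm)
  have h1 : ((Fintype.card N).choose m : ℝ) ≠ 0 := by
    exact_mod_cast (Nat.choose_pos hmn).ne'
  have h2 : ((Fintype.card N).choose k : ℝ) ≠ 0 := by
    exact_mod_cast (Nat.choose_pos (hkm.trans hmn)).ne'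
  field_simp
  linear_combination (-A k) * hchoose
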